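/- Fix a real number ε > 0 and define f̃ : ℂ² → ℂ³ by f̃(s,t) = (s² + 2ε·conj(s), st + ε·conj(s), t). There exists δ₀ with 0 < δ₀ < ε such that for every real δ with 0 < δ < δ₀ the following holds: the only solution of the equation f̃(s,t) = (−δw + ε²(conj(w)² − 2w), ε²(conj(w)² − w), −ε·conj(w)) with (s,t) ∈ ℂ², w ∈ ℂ and |w| ≤ 1 is w = 0 and (s,t) = (0,0). -/

import Mathlib

/-- The membrane `H` filling in the shifted singular value curve `Σ'` of the perturbed
cross cap `f̃(s,t) = (s² + 2ε·conj s, st + ε·conj s, t)` meets the image of `f̃` only at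
the origin: for all small `δ > 0`, the only solution of
`f̃(s,t) = (−δw + ε²(conj(w)² − 2w), ε²(conj(w)² − w), −ε·conj w)` with `|w| ≤ 1` is
`w = 0`, `(s,t) = (0,0)`. -/
theorem stmt_13 (ε : ℝ) (hε : 0 < ε) (f : ℂ × ℂ → ℂ × ℂ × ℂ)
    (hf : ∀ s t : ℂ, f (s, t) =
      (s ^ 2 + 2 * (ε : ℂ) * (starRingEnd ℂ) s,
       s * t + (ε : ℂ) * (starRingEnd ℂ) s, t)) :
    ∃ δ₀ : ℝ, 0 < δ₀ ∧ δ₀ < ε ∧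
      ∀ δ : ℝ, 0 < δ → δ < δ₀ →
        ∀ s t w : ℂ, ‖w‖ ≤ 1 →
          f (s, t) =
            (-(δ : ℂ) * w + (ε : ℂ) ^ 2 * (((starRingEnd ℂ) w) ^ 2 - 2 * w),
             (ε : ℂ) ^ 2 * (((starRingEnd ℂ) w) ^ 2 - w),
             -(ε : ℂ) * (starRingEnd ℂ) w) →
          w = 0 ∧ s = 0 ∧ t = 0 := by
  refine ⟨ε / 2, by linarith, by linarith, ?_⟩
  intro δ hδ hδ' s t w hw heq
  rw [hf] at heq
  rw [Prod.mk.injEq, Prod.mk.injEq] at heq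
  obtain ⟨h1, h2, h3⟩ := heq
  set c := starRingEnd ℂ with hc
  have hεC : (ε : ℂ) ≠ 0 := Complex.ofReal_ne_zero.mpr hε.ne'
  subst h3
  -- key relation 1 : (s + ε conj w)^2 = -δ w
  have hu2 : (s + (ε : ℂ) * c w) ^ 2 = -(δ : ℂ) * w := by
    linear_combination h1 - 2 * h2
  -- key relation 2 : conj (s + ε conj w) = (s + ε conj w) * conj w
  have hcu : c s + (ε : ℂ) * w = (s + (ε : ℂ) * c w) * c w := by
    have hmul : (ε : ℂ) * (c s + (ε : ℂ) * w - (s + (ε : ℂ) * c w) * c w) = 0 := by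
      linear_combination h2
    have := mul_eq_zero.mp hmul
    rcases this with h | h
    · exact absurd h hεC
    · linear_combination h
  set u := s + (ε : ℂ) * c w with hu
  have hcu2 : c u = u * c w := by
    rw [hu, hc]
    simp only [map_add, map_mul, Complex.conj_conj, Complex.conj_ofReal]
    rw [← hc]
    exact hcu
  have hkey : u * c u = -(δ : ℂ) * (w * c w) := by
    linear_combination u * hcu2 + c w * hu2
  rw [Complex.mul_conj, Complex.mul_conj] at hkey
  have hre : (Complex.normSq u : ℝ) = -δ * Complex.normSq w := by
    have := congrArg Complex.re hkey
    simpa using this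
  have hw0 : Complex.normSq w = 0 := by
    nlinarith [Complex.normSq_nonneg u, Complex.normSq_nonneg w]
  have hu0 : Complex.normSq u = 0 := by
    rw [hre, hw0]; ring
  have hwz : w = 0 := Complex.normSq_eq_zero.mp hw0
  have huz : u = 0 := Complex.normSq_eq_zero.mp hu0
  subst hwz
  have hsz : s = 0 := by
    have : s + (ε : ℂ) * c 0 = 0 := huz
    simpa using this
  exact ⟨rfl, hsz, by simp⟩
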